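/- Let n be a positive integer, let Λ* = {λ ∈ ℝⁿ : λ_i > 0 for every i and Σ_{i=1}^n λ_i² = 1}, and let B ⊆ ℝⁿ. Assume that for every (u,v) ∈ Δ⁺ there exist λ ∈ Λ*, β ∈ B, and real numbers s < t with u = s·λ + β and v = t·λ + β. Then the map f : Λ*×B → ℝⁿ×ℝⁿ defined by f(λ,β) = ( λ, β − ((Σ_{i=1}^n β_i)/(Σ_{i=1}^n λ_i))·λ ) takes all its values in Adm_n, and f is surjective onto Adm_n: for every (l,b) ∈ Adm_n there exists (λ,β) ∈ Λ*×B with f(λ,β) = (l,b). -/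

import Mathlib

/-- The set `Adm_n` of admissible pairs `(l, b)`:
`l i > 0` for every `i`, `∑ i, (l i)² = 1`, and `∑ i, b i = 0`. -/
def Adm (n : ℕ) : Set ((Fin n → ℝ) × (Fin n → ℝ)) :=
  {p | (∀ i, 0 < p.1 i) ∧ (∑ i, (p.1 i) ^ 2 = 1) ∧ (∑ i, p.2 i = 0)}

/-- Let `Λ* = {λ : λ_i > 0 for all i, ∑ λ_i² = 1}` and let `B ⊆ ℝⁿ` be such that
every point of `Δ⁺` lies on a half-plane `π_(λ,β)` with `(λ,β) ∈ Λ*×B`.  Then the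
map `f(λ,β) = (λ, β − ((∑ β_i)/(∑ λ_i))·λ)` maps `Λ*×B` into `Adm_n`, and it is
surjective onto `Adm_n`. -/
theorem normalization_map_onto_Adm (n : ℕ) (hn : 0 < n)
    (B : Set (Fin n → ℝ))
    (LamStar : Set (Fin n → ℝ))
    (hLamStar : LamStar = {l : Fin n → ℝ | (∀ i, 0 < l i) ∧ ∑ i, (l i) ^ 2 = 1})
    (hex : ∀ u v : Fin n → ℝ, (∀ i, u i < v i) →
      ∃ lam ∈ LamStar, ∃ beta ∈ B, ∃ s t : ℝ, s < t ∧
        u = (fun i => s * lam i + beta i) ∧ v = (fun i => t * lam i + beta i))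
    (f : (Fin n → ℝ) × (Fin n → ℝ) → (Fin n → ℝ) × (Fin n → ℝ))
    (hf : ∀ p, f p = (p.1, fun i => p.2 i - ((∑ j, p.2 j) / (∑ j, p.1 j)) * p.1 i)) :
    Set.MapsTo f (LamStar ×ˢ B) (Adm n) ∧ Set.SurjOn f (LamStar ×ˢ B) (Adm n) := by
  subst hLamStar
  have sumpos : ∀ l : Fin n → ℝ, (∀ i, 0 < l i) → 0 < ∑ j, l j := by
    intro l hl
    apply Finset.sum_pos (fun i _ => hl i)
    exact Finset.univ_nonempty_iff.2 ⟨⟨0, hn⟩⟩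
  constructor
  · rintro ⟨lam, beta⟩ ⟨⟨hpos, hsum⟩, _⟩
    rw [hf]
    refine ⟨hpos, hsum, ?_⟩
    have hs := sumpos lam hpos
    simp only [Finset.sum_sub_distrib, ← Finset.mul_sum]
    field_simp
    ring
  · rintro ⟨l, b⟩ ⟨hlpos, hlsum, hbsum⟩
    obtain ⟨lam, ⟨hpos, hsum⟩, beta, hbeta, s, t, hst, hu, hv⟩ :=
      hex b (fun i => l i + b i) (fun i => show b i < l i + b i by linarith [hlpos i])
    -- l = (t - s) • lam
    have hl : ∀ i, l i = (t - s) * lam i := by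
      intro i
      have h1 := congrFun hu i
      have h2 := congrFun hv i
      nlinarith [h1, h2]
    have hts : t - s = 1 := by
      have h2 : ∑ i, (l i) ^ 2 = (t - s) ^ 2 * ∑ i, (lam i) ^ 2 := by
        rw [Finset.mul_sum]
        exact Finset.sum_congr rfl (fun i _ => by rw [hl i]; ring)
      rw [hsum, mul_one, hlsum] at h2
      nlinarith
    have hlam : ∀ i, l i = lam i := fun i => by rw [hl i, hts, one_mul]
    have hbsum' : ∑ j, beta j = -s * ∑ j, lam j := by
      have : ∑ j, b j = ∑ j, (s * lam j + beta j) := by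
        rw [hu]
      rw [hbsum, Finset.sum_add_distrib, ← Finset.mul_sum] at this
      linarith
    refine ⟨(lam, beta), ⟨⟨hpos, hsum⟩, hbeta⟩, ?_⟩
    rw [hf]
    have hspos := sumpos lam hpos
    have hdiv : (∑ j, beta j) / (∑ j, lam j) = -s := by
      rw [hbsum']; field_simp
    ext i
    · exact (hlam i).symm
    · simp only [hdiv]
      have := congrFun hu i
      simp [this]; ring
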